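/- arXiv:2512.10697 — 2 statements merged into one kernel-verified Lean document; each statement's English description precedes it below -/
import Mathlib

section
/- Let Y₁, …, Y_{2n} be i.i.d. N(θ, σ²) with σ > 0 and n ≥ 1. Let S₁ = (1/n)∑_{i=1}^n Y_i, let X = 1 if S₁ ≤ ψ and X = 0 otherwise, and define θ̂ = S₁ if X = 0, and θ̂ = (1/(2n))∑_{i=1}^{2n} Y_i if X = 1. Then E[θ̂] = θ + (σ/(2√n)) φ((√n/σ)(ψ − θ)). -/
open MeasureTheory ProbabilityTheory Real

/-- Standard normal density. -/
noncomputable def stdNormalPDF (z : ℝ) : ℝ := (Real.sqrt (2 * Real.pi))⁻¹ * Real.exp (-z ^ 2 / 2)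

/-- Standard normal cumulative distribution function. -/
noncomputable def stdNormalCDF (z : ℝ) : ℝ := ∫ t in Set.Iic z, stdNormalPDF t

open Filter Topology
open scoped NNReal ENNReal

section AuxLemmas

lemma pdf_conv (m₁ m₂ : ℝ) (v₁ v₂ : ℝ≥0) (hv₁ : v₁ ≠ 0) (hv₂ : v₂ ≠ 0) (z x : ℝ) :
    gaussianPDFReal m₁ v₁ x * gaussianPDFReal m₂ v₂ (z - x)
      = gaussianPDFReal (m₁ + m₂) (v₁ + v₂) z
        * gaussianPDFReal (m₁ + v₁ * (z - m₁ - m₂) / (v₁ + v₂)) (v₁ * v₂ / (v₁ + v₂)) x := by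
  have ha : (0:ℝ) < v₁ := by positivity
  have hb : (0:ℝ) < v₂ := by positivity
  unfold gaussianPDFReal
  have hcoe : ((v₁ * v₂ / (v₁ + v₂) : ℝ≥0) : ℝ) = (v₁:ℝ) * v₂ / ((v₁:ℝ) + v₂) := by
    push_cast; ring
  have hcoe2 : ((v₁ + v₂ : ℝ≥0) : ℝ) = (v₁:ℝ) + v₂ := by push_cast; ring
  rw [hcoe, hcoe2]
  have hconst : (√(2 * π * v₁))⁻¹ * (√(2 * π * v₂))⁻¹
      = (√(2 * π * ((v₁:ℝ) + v₂)))⁻¹ * (√(2 * π * ((v₁:ℝ) * v₂ / ((v₁:ℝ) + v₂))))⁻¹ := by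
    rw [← mul_inv, ← mul_inv, ← Real.sqrt_mul (by positivity), ← Real.sqrt_mul (by positivity)]
    congr 1
    field_simp
  have hexp : rexp (-(x - m₁) ^ 2 / (2 * v₁)) * rexp (-(z - x - m₂) ^ 2 / (2 * v₂))
      = rexp (-(z - (m₁ + m₂)) ^ 2 / (2 * ((v₁:ℝ) + v₂)))
        * rexp (-(x - (m₁ + (v₁:ℝ) * (z - m₁ - m₂) / ((v₁:ℝ) + v₂))) ^ 2
            / (2 * ((v₁:ℝ) * v₂ / ((v₁:ℝ) + v₂)))) := by
    rw [← Real.exp_add, ← Real.exp_add]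
    congr 1
    field_simp
    ring
  calc (√(2 * π * v₁))⁻¹ * rexp (-(x - m₁) ^ 2 / (2 * v₁))
      * ((√(2 * π * v₂))⁻¹ * rexp (-(z - x - m₂) ^ 2 / (2 * v₂)))
      = ((√(2 * π * v₁))⁻¹ * (√(2 * π * v₂))⁻¹)
        * (rexp (-(x - m₁) ^ 2 / (2 * v₁)) * rexp (-(z - x - m₂) ^ 2 / (2 * v₂))) := by ring
    _ = _ := by rw [hconst, hexp]; ring

lemma gaussian_conv (m₁ m₂ : ℝ) (v₁ v₂ : ℝ≥0) (hv₁ : v₁ ≠ 0) (hv₂ : v₂ ≠ 0) :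
    Measure.map (fun p : ℝ × ℝ => p.1 + p.2) ((gaussianReal m₁ v₁).prod (gaussianReal m₂ v₂))
      = gaussianReal (m₁ + m₂) (v₁ + v₂) := by
  have hv : v₁ + v₂ ≠ 0 := by positivity
  have hvc : v₁ * v₂ / (v₁ + v₂) ≠ 0 := by positivity
  set g₁ := gaussianPDF m₁ v₁ with hg₁
  set g₂ := gaussianPDF m₂ v₂ with hg₂
  have hmg₁ : Measurable g₁ := measurable_gaussianPDF _ _
  have hmg₂ : Measurable g₂ := measurable_gaussianPDF _ _
  have key : ∀ z : ℝ, (∫⁻ x, g₁ x * g₂ (z - x)) = gaussianPDF (m₁ + m₂) (v₁ + v₂) z := by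
    intro z
    have h1 : ∀ x : ℝ, g₁ x * g₂ (z - x)
        = ENNReal.ofReal (gaussianPDFReal (m₁ + m₂) (v₁ + v₂) z)
          * ENNReal.ofReal (gaussianPDFReal (m₁ + v₁ * (z - m₁ - m₂) / (v₁ + v₂))
              (v₁ * v₂ / (v₁ + v₂)) x) := by
      intro x
      rw [hg₁, hg₂, gaussianPDF, gaussianPDF, ← ENNReal.ofReal_mul (gaussianPDFReal_nonneg _ _ _),
        pdf_conv m₁ m₂ v₁ v₂ hv₁ hv₂ z x,
        ENNReal.ofReal_mul (gaussianPDFReal_nonneg _ _ _)]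
    simp_rw [h1]
    rw [lintegral_const_mul' _ _ ENNReal.ofReal_ne_top,
      lintegral_gaussianPDFReal_eq_one _ hvc, mul_one]
    rfl
  ext s hs
  rw [Measure.map_apply measurable_add hs,
    gaussianReal_of_var_ne_zero _ hv₁, gaussianReal_of_var_ne_zero _ hv₂,
    gaussianReal_apply _ hv s,
    Measure.prod_apply (measurable_add hs)]
  have hinner : ∀ x : ℝ, (volume.withDensity g₂) (Prod.mk x ⁻¹' ((fun p : ℝ × ℝ => p.1 + p.2) ⁻¹' s))
      = ∫⁻ z in s, g₂ (z - x) := by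
    intro x
    have hpre : Prod.mk x ⁻¹' ((fun p : ℝ × ℝ => p.1 + p.2) ⁻¹' s) = (fun y => x + y) ⁻¹' s := rfl
    rw [hpre, withDensity_apply _ (hs.preimage (measurable_const_add x))]
    have hmap : Measure.map (fun z : ℝ => z + (-x)) volume = volume :=
      map_add_right_eq_self volume (-x)
    conv_lhs => rw [← hmap]
    rw [setLIntegral_map (hs.preimage (measurable_const_add x))
      hmg₂ (measurable_add_const (-x))]
    have : (fun z : ℝ => z + (-x)) ⁻¹' ((fun y => x + y) ⁻¹' s) = s := by
      ext z; simp [Set.mem_preimage]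
    rw [this]
    simp_rw [← sub_eq_add_neg]
  simp_rw [← hg₁, ← hg₂, hinner]
  -- now : ∫⁻ x, (∫⁻ z in s, g₂ (z - x)) ∂(volume.withDensity g₁) = ∫⁻ z in s, gaussianPDF _ _ z
  have hF : Measurable (Function.uncurry fun x z : ℝ => s.indicator (fun z => g₂ (z - x)) z) := by
    apply Measurable.indicator
    · exact hmg₂.comp (measurable_snd.sub measurable_fst)
    · exact measurable_snd hs
  have hFx : ∀ x : ℝ, Measurable fun z => s.indicator (fun z => g₂ (z - x)) z := fun x =>
    (hmg₂.comp (measurable_id.sub_const x)).indicator hs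
  have hrw : ∀ x : ℝ, (∫⁻ z in s, g₂ (z - x)) = ∫⁻ z, s.indicator (fun z => g₂ (z - x)) z := by
    intro x; rw [lintegral_indicator hs]
  simp_rw [hrw]
  rw [lintegral_withDensity_eq_lintegral_mul _ hmg₁ (by
    exact Measurable.lintegral_prod_right hF)]
  simp only [Pi.mul_apply]
  have : ∀ x : ℝ, g₁ x * ∫⁻ z, s.indicator (fun z => g₂ (z - x)) z
      = ∫⁻ z, g₁ x * s.indicator (fun z => g₂ (z - x)) z := by
    intro x; rw [lintegral_const_mul _ (hFx x)]
  simp_rw [this]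
  rw [lintegral_lintegral_swap ((hmg₁.comp measurable_fst).mul hF).aemeasurable]
  have hins : ∀ y : ℝ, (∫⁻ x, g₁ x * s.indicator (fun z => g₂ (z - x)) y)
      = s.indicator (fun z => gaussianPDF (m₁ + m₂) (v₁ + v₂) z) y := by
    intro y
    by_cases hy : y ∈ s
    · simp only [Set.indicator_of_mem hy]
      exact key y
    · simp [Set.indicator_of_notMem hy]
  simp_rw [hins]
  rw [lintegral_indicator hs]

section Analytic
variable {m ψ : ℝ} {v : ℝ≥0}

lemma pdf_hasDeriv (hv : v ≠ 0) (x : ℝ) :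
    HasDerivAt (fun x => (v : ℝ) * gaussianPDFReal m v x) (gaussianPDFReal m v x * (m - x)) x := by
  have hv' : (0:ℝ) < v := by positivity
  have h1 : HasDerivAt (fun x : ℝ => -(x - m) ^ 2 / (2 * (v:ℝ))) (-(x - m) / v) x := by
    have h2 : HasDerivAt (fun x : ℝ => (x - m) ^ 2) (2 * (x - m)) x := by
      simpa using ((hasDerivAt_id x).sub_const m).fun_pow 2
    have := (h2.neg).div_const (2 * (v:ℝ))
    refine HasDerivAt.congr_deriv (by exact this) ?_
    field_simp
  have h3 : HasDerivAt (fun x : ℝ => rexp (-(x - m) ^ 2 / (2 * (v:ℝ))))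
      (rexp (-(x - m) ^ 2 / (2 * (v:ℝ))) * (-(x - m) / v)) x := h1.exp
  have h4 := h3.const_mul ((v:ℝ) * (√(2 * π * v))⁻¹)
  have heq : (fun x : ℝ => (v : ℝ) * gaussianPDFReal m v x)
      = fun x => (v:ℝ) * (√(2 * π * v))⁻¹ * rexp (-(x - m) ^ 2 / (2 * (v:ℝ))) := by
    funext y; unfold gaussianPDFReal; ring
  rw [heq]
  refine HasDerivAt.congr_deriv (by exact h4) ?_
  unfold gaussianPDFReal
  field_simp
  ring

lemma pdf_tendsto_bot (hv : v ≠ 0) :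
    Tendsto (gaussianPDFReal m v) atBot (𝓝 0) := by
  have hv' : (0:ℝ) < v := by positivity
  have h1 : Tendsto (fun x : ℝ => |x - m|) atBot atTop :=
    tendsto_abs_atBot_atTop.comp (tendsto_atBot_add_const_right _ (-m) tendsto_id)
  have h2 : Tendsto (fun x : ℝ => (x - m) ^ 2) atBot atTop := by
    have := (tendsto_pow_atTop (two_ne_zero)).comp h1
    simpa [Function.comp_def, sq_abs] using this
  have h3 : Tendsto (fun x : ℝ => -(x - m) ^ 2 / (2 * (v:ℝ))) atBot atBot := by
    apply Tendsto.atBot_div_const (by positivity)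
    exact tendsto_neg_atTop_atBot.comp h2
  have h4 : Tendsto (fun x : ℝ => rexp (-(x - m) ^ 2 / (2 * (v:ℝ)))) atBot (𝓝 0) :=
    Real.tendsto_exp_atBot.comp h3
  have := h4.const_mul (√(2 * π * v))⁻¹
  simpa [gaussianPDFReal_def] using this

lemma pdf_tendsto_top (hv : v ≠ 0) :
    Tendsto (gaussianPDFReal m v) atTop (𝓝 0) := by
  have hv' : (0:ℝ) < v := by positivity
  have h1 : Tendsto (fun x : ℝ => |x - m|) atTop atTop :=
    tendsto_abs_atTop_atTop.comp (tendsto_atTop_add_const_right _ (-m) tendsto_id)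
  have h2 : Tendsto (fun x : ℝ => (x - m) ^ 2) atTop atTop := by
    have := (tendsto_pow_atTop (two_ne_zero)).comp h1
    simpa [Function.comp_def, sq_abs] using this
  have h3 : Tendsto (fun x : ℝ => -(x - m) ^ 2 / (2 * (v:ℝ))) atTop atBot := by
    apply Tendsto.atBot_div_const (by positivity)
    exact tendsto_neg_atTop_atBot.comp h2
  have h4 : Tendsto (fun x : ℝ => rexp (-(x - m) ^ 2 / (2 * (v:ℝ)))) atTop (𝓝 0) :=
    Real.tendsto_exp_atBot.comp h3
  have := h4.const_mul (√(2 * π * v))⁻¹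
  simpa [gaussianPDFReal_def] using this

lemma int_pdf_sub (hv : v ≠ 0) :
    Integrable (fun x => gaussianPDFReal m v x * (x - m)) := by
  have hv' : (0:ℝ) < v := by positivity
  have hb : (0:ℝ) < (2 * (v:ℝ))⁻¹ := by positivity
  have h1 : Integrable (fun x : ℝ => (x - m) * rexp (-(2 * (v:ℝ))⁻¹ * (x - m) ^ 2)) :=
    (integrable_mul_exp_neg_mul_sq hb).comp_sub_right m
  have h2 := h1.const_mul (√(2 * π * v))⁻¹
  apply h2.congr
  filter_upwards with x
  unfold gaussianPDFReal
  rw [show -(2 * (v:ℝ))⁻¹ * (x - m) ^ 2 = -(x - m) ^ 2 / (2 * (v:ℝ)) by field_simp]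
  ring

lemma int_pdf_mul (hv : v ≠ 0) :
    Integrable (fun x => gaussianPDFReal m v x * x) := by
  have h1 := (int_pdf_sub (m := m) hv).add ((integrable_gaussianPDFReal m v).const_mul m)
  apply h1.congr
  filter_upwards with x
  simp only [Pi.add_apply]
  ring

lemma int_pdf_msub (hv : v ≠ 0) :
    Integrable (fun x => gaussianPDFReal m v x * (m - x)) := by
  have h1 := (int_pdf_sub (m := m) hv).neg
  apply h1.congr
  filter_upwards with x
  simp only [Pi.neg_apply]
  ring

lemma int_Iic_pdf (hv : v ≠ 0) :
    ∫ x in Set.Iic ψ, gaussianPDFReal m v x * (m - x) = v * gaussianPDFReal m v ψ := by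
  have hb0 : Tendsto (fun x : ℝ => (v:ℝ) * gaussianPDFReal m v x) atBot (𝓝 0) := by
    simpa using (pdf_tendsto_bot (m := m) hv).const_mul (v:ℝ)
  have h := integral_Iic_of_hasDerivAt_of_tendsto' (a := ψ)
    (fun x _ => pdf_hasDeriv hv x) (int_pdf_msub hv).integrableOn hb0
  rw [h, sub_zero]

lemma int_pdf_mean (hv : v ≠ 0) :
    ∫ x, gaussianPDFReal m v x * x = m := by
  have hb0 : Tendsto (fun x : ℝ => (v:ℝ) * gaussianPDFReal m v x) atBot (𝓝 0) := by
    simpa using (pdf_tendsto_bot (m := m) hv).const_mul (v:ℝ)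
  have ht0 : Tendsto (fun x : ℝ => (v:ℝ) * gaussianPDFReal m v x) atTop (𝓝 0) := by
    simpa using (pdf_tendsto_top (m := m) hv).const_mul (v:ℝ)
  have h0 : ∫ x, gaussianPDFReal m v x * (m - x) = 0 := by
    have h := integral_of_hasDerivAt_of_tendsto (fun x => pdf_hasDeriv hv x)
      (int_pdf_msub hv) hb0 ht0
    simpa using h
  have h1 : ∫ x, gaussianPDFReal m v x * x
      = (∫ x, gaussianPDFReal m v x * (m - x)) * (-1) + m * ∫ x, gaussianPDFReal m v x := by
    rw [← integral_mul_const, ← integral_const_mul, ← integral_add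
      ((int_pdf_msub hv).mul_const _) ((integrable_gaussianPDFReal m v).const_mul m)]
    congr 1; funext x; ring
  rw [h1, h0, integral_gaussianPDFReal_eq_one m hv]
  ring

end Analytic

section Glue
variable {Ω : Type*} [MeasurableSpace Ω] {P : Measure Ω} [IsProbabilityMeasure P]

lemma map_add_gauss {X Z : Ω → ℝ} (hX : Measurable X) (hZ : Measurable Z)
    (hXZ : IndepFun X Z P) {m₁ m₂ : ℝ} {v₁ v₂ : ℝ≥0} (hv₁ : v₁ ≠ 0) (hv₂ : v₂ ≠ 0)
    (h1 : Measure.map X P = gaussianReal m₁ v₁) (h2 : Measure.map Z P = gaussianReal m₂ v₂) :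
    Measure.map (fun ω => X ω + Z ω) P = gaussianReal (m₁ + m₂) (v₁ + v₂) := by
  have hpair : Measure.map (fun ω => (X ω, Z ω)) P
      = (gaussianReal m₁ v₁).prod (gaussianReal m₂ v₂) := by
    rw [← h1, ← h2]
    exact (indepFun_iff_map_prod_eq_prod_map_map hX.aemeasurable hZ.aemeasurable).mp hXZ
  calc Measure.map (fun ω => X ω + Z ω) P
      = Measure.map ((fun p : ℝ × ℝ => p.1 + p.2) ∘ fun ω => (X ω, Z ω)) P := rfl
    _ = Measure.map (fun p : ℝ × ℝ => p.1 + p.2) (Measure.map (fun ω => (X ω, Z ω)) P) :=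
        (Measure.map_map measurable_add (hX.prodMk hZ)).symm
    _ = gaussianReal (m₁ + m₂) (v₁ + v₂) := by rw [hpair]; exact gaussian_conv _ _ _ _ hv₁ hv₂

lemma map_sum_gauss (Y : ℕ → Ω → ℝ) (hY : ∀ i, Measurable (Y i))
    (hindep : iIndepFun Y P)
    {θ : ℝ} {v : ℝ≥0} (hlaw : ∀ i, Measure.map (Y i) P = gaussianReal θ v) (hv : v ≠ 0)
    (s : Finset ℕ) (hs : s.Nonempty) :
    Measure.map (fun ω => ∑ i ∈ s, Y i ω) P
      = gaussianReal ((s.card : ℝ) * θ) ((s.card : ℝ≥0) * v) := by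
  induction hs using Finset.Nonempty.cons_induction with
  | singleton a => simpa using hlaw a
  | cons a s ha hs IH =>
    have hsum_meas : Measurable fun ω => ∑ i ∈ s, Y i ω :=
      Finset.measurable_sum s (fun i _ => hY i)
    have hfun : (∑ j ∈ s, Y j) = fun ω => ∑ j ∈ s, Y j ω :=
      funext fun ω => Finset.sum_apply ω s Y
    have hind : IndepFun (Y a) (fun ω => ∑ i ∈ s, Y i ω) P := by
      have h := (hindep.indepFun_finsetSum_of_notMem hY ha).symm
      rwa [hfun] at h
    have hcard : ((s.card : ℝ≥0)) ≠ 0 := by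
      simpa using hs.card_ne_zero
    have h := map_add_gauss (hY a) hsum_meas hind hv (by positivity) (hlaw a) IH
    have hgoal : Measure.map (fun ω => ∑ i ∈ Finset.cons a s ha, Y i ω) P
        = Measure.map (fun ω => Y a ω + ∑ i ∈ s, Y i ω) P := by
      simp_rw [Finset.sum_cons]
    rw [hgoal, h]
    congr 1
    · push_cast [Finset.card_cons]
      ring
    · push_cast [Finset.card_cons]
      ring

lemma integral_gaussianReal {m : ℝ} {v : ℝ≥0} (hv : v ≠ 0) (f : ℝ → ℝ) :
    ∫ x, f x ∂(gaussianReal m v) = ∫ x, gaussianPDFReal m v x * f x := by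
  rw [gaussianReal_of_var_ne_zero _ hv]
  have hd : gaussianPDF m v = fun x => ((gaussianPDFReal m v x).toNNReal : ℝ≥0∞) := rfl
  rw [hd, integral_withDensity_eq_integral_smul (measurable_gaussianPDFReal m v).real_toNNReal f]
  congr 1
  funext x
  rw [NNReal.smul_def, Real.coe_toNNReal _ (gaussianPDFReal_nonneg m v x), smul_eq_mul]

lemma setIntegral_gaussianReal {m : ℝ} {v : ℝ≥0} (hv : v ≠ 0) (f : ℝ → ℝ) {t : Set ℝ}
    (ht : MeasurableSet t) :
    ∫ x in t, f x ∂(gaussianReal m v) = ∫ x in t, gaussianPDFReal m v x * f x := by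
  rw [gaussianReal_of_var_ne_zero _ hv]
  have hd : gaussianPDF m v = fun x => ((gaussianPDFReal m v x).toNNReal : ℝ≥0∞) := rfl
  rw [hd, restrict_withDensity ht,
    integral_withDensity_eq_integral_smul (measurable_gaussianPDFReal m v).real_toNNReal f]
  congr 1
  funext x
  rw [NNReal.smul_def, Real.coe_toNNReal _ (gaussianPDFReal_nonneg m v x), smul_eq_mul]

lemma integrable_gaussianReal_iff {m : ℝ} {v : ℝ≥0} (hv : v ≠ 0) {f : ℝ → ℝ} :
    Integrable f (gaussianReal m v) ↔ Integrable (fun x => f x * gaussianPDFReal m v x) := by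
  rw [gaussianReal_of_var_ne_zero _ hv,
    integrable_withDensity_iff (measurable_gaussianPDF m v)
      (Filter.Eventually.of_forall fun x => ENNReal.ofReal_lt_top)]
  constructor <;> intro h <;> apply h.congr <;> filter_upwards with x <;>
    simp [gaussianPDF, ENNReal.toReal_ofReal (gaussianPDFReal_nonneg m v x)]

end Glue

end AuxLemmas

theorem stmt_4 {Ω : Type*} [MeasurableSpace Ω] (P : Measure Ω) [IsProbabilityMeasure P]
    (Y : ℕ → Ω → ℝ) (hY : ∀ i, Measurable (Y i))
    (θ σ : ℝ) (hσ : 0 < σ) (n : ℕ) (hn : 1 ≤ n)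
    (hindep : iIndepFun Y P)
    (hlaw : ∀ i, Measure.map (Y i) P = gaussianReal θ ((σ ^ 2).toNNReal))
    (ψ : ℝ)
    (S₁ : Ω → ℝ) (hS₁ : ∀ ω, S₁ ω = (∑ i ∈ Finset.range n, Y i ω) / n)
    (θhat : Ω → ℝ)
    (hθhat : ∀ ω, θhat ω =
      if S₁ ω ≤ ψ then (∑ i ∈ Finset.range (2 * n), Y i ω) / (2 * n) else S₁ ω) :
    ∫ ω, θhat ω ∂P
      = θ + σ / (2 * Real.sqrt n) * stdNormalPDF (Real.sqrt n / σ * (ψ - θ)) := by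
  have hn0 : (n : ℝ) ≠ 0 := Nat.cast_ne_zero.mpr (by omega)
  have hnpos : (0:ℝ) < n := by positivity
  set v : ℝ≥0 := (σ ^ 2).toNNReal with hv_def
  have hv_coe : (v : ℝ) = σ ^ 2 := Real.coe_toNNReal _ (by positivity)
  have hv : v ≠ 0 := by
    rw [hv_def, ne_eq, Real.toNNReal_eq_zero, not_le]
    positivity
  -- the two block sums
  set T₁ : Ω → ℝ := fun ω => ∑ i ∈ Finset.range n, Y i ω with hT₁
  set T₂ : Ω → ℝ := fun ω => ∑ i ∈ Finset.Ico n (2 * n), Y i ω with hT₂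
  set S₂ : Ω → ℝ := fun ω => T₂ ω / n with hS₂def
  have hT₁m : Measurable T₁ := Finset.measurable_sum _ fun i _ => hY i
  have hT₂m : Measurable T₂ := Finset.measurable_sum _ fun i _ => hY i
  have hS₁m : Measurable S₁ := by
    have : S₁ = fun ω => T₁ ω / n := funext fun ω => hS₁ ω
    rw [this]; exact hT₁m.div_const _
  have hS₂m : Measurable S₂ := hT₂m.div_const _
  -- laws of S₁ and S₂
  set vn : ℝ≥0 := (σ ^ 2 / n).toNNReal with hvn_def
  have hvn_coe : (vn : ℝ) = σ ^ 2 / n := Real.coe_toNNReal _ (by positivity)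
  have hvn : vn ≠ 0 := by
    rw [hvn_def, ne_eq, Real.toNNReal_eq_zero, not_le]
    positivity

  have hmap₁ : Measure.map T₁ P = gaussianReal ((n : ℝ) * θ) ((n : ℝ≥0) * v) := by
    have := map_sum_gauss Y hY hindep hlaw hv (Finset.range n)
      (Finset.nonempty_range_iff.mpr (by omega))
    simpa [Finset.card_range] using this
  have hmap₂ : Measure.map T₂ P = gaussianReal ((n : ℝ) * θ) ((n : ℝ≥0) * v) := by
    have := map_sum_gauss Y hY hindep hlaw hv (Finset.Ico n (2 * n))
      (by rw [Finset.nonempty_Ico]; omega)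
    simpa [Nat.card_Ico, show 2 * n - n = n by omega] using this
  have hmapS₁ : Measure.map S₁ P = gaussianReal θ vn := by
    have hfun : S₁ = (fun x : ℝ => x * (n:ℝ)⁻¹) ∘ T₁ := by
      funext ω; simp [hS₁ ω, hT₁, Function.comp, div_eq_mul_inv]
    rw [hfun, ← Measure.map_map (measurable_mul_const _) hT₁m, hmap₁,
      gaussianReal_map_mul_const]
    congr 1
    · field_simp
    · apply NNReal.coe_injective
      simp only [NNReal.coe_mul, NNReal.coe_mk, NNReal.coe_natCast, hv_coe, hvn_coe]
      field_simp
  have hmapS₂ : Measure.map S₂ P = gaussianReal θ vn := by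
    have hfun : S₂ = (fun x : ℝ => x * (n:ℝ)⁻¹) ∘ T₂ := by
      funext ω; simp [hS₂def, Function.comp, div_eq_mul_inv]
    rw [hfun, ← Measure.map_map (measurable_mul_const _) hT₂m, hmap₂,
      gaussianReal_map_mul_const]
    congr 1
    · field_simp
    · apply NNReal.coe_injective
      simp only [NNReal.coe_mul, NNReal.coe_mk, NNReal.coe_natCast, hv_coe, hvn_coe]
      field_simp
  -- independence of S₁ and S₂
  have hindepS : IndepFun S₁ S₂ P := by
    have hdisj : Disjoint (Finset.range n) (Finset.Ico n (2 * n)) := by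
      rw [Finset.range_eq_Ico]
      exact Finset.Ico_disjoint_Ico_consecutive 0 n (2 * n)
    have hbig := hindep.indepFun_finset (Finset.range n) (Finset.Ico n (2 * n)) hdisj hY
    have hφ : ∀ s : Finset ℕ, Measurable (fun f : {x // x ∈ s} → ℝ => (∑ i, f i) / n) :=
      fun s => (Finset.measurable_sum Finset.univ fun i _ => measurable_pi_apply i).div_const _
    have h := hbig.comp (hφ (Finset.range n)) (hφ (Finset.Ico n (2 * n)))
    have e₁ : ((fun f : {x // x ∈ Finset.range n} → ℝ => (∑ i, f i) / n)
        ∘ fun a (i : {x // x ∈ Finset.range n}) => Y i a) = S₁ := by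
      funext ω
      simp only [Function.comp_apply, hS₁ ω]
      rw [Finset.sum_coe_sort (Finset.range n) (fun i => Y i ω)]
    have e₂ : ((fun f : {x // x ∈ Finset.Ico n (2*n)} → ℝ => (∑ i, f i) / n)
        ∘ fun a (i : {x // x ∈ Finset.Ico n (2*n)}) => Y i a) = S₂ := by
      funext ω
      simp only [Function.comp_apply, hS₂def]
      rw [Finset.sum_coe_sort (Finset.Ico n (2*n)) (fun i => Y i ω)]
    rwa [e₁, e₂] at h
  -- θhat as a function of (S₁, S₂)
  set g : ℝ × ℝ → ℝ := fun p => if p.1 ≤ ψ then (p.1 + p.2) / 2 else p.1 with hg_def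
  have hg_meas : Measurable g := by
    apply Measurable.ite (measurableSet_le measurable_fst measurable_const)
    · exact (measurable_fst.add measurable_snd).div_const 2
    · exact measurable_fst
  have hθhat_eq : θhat = fun ω => g (S₁ ω, S₂ ω) := by
    funext ω
    rw [hθhat ω]
    have hsplit : (∑ i ∈ Finset.range (2 * n), Y i ω) = T₁ ω + T₂ ω := by
      rw [hT₁, hT₂, Finset.range_eq_Ico]
      beta_reduce
      rw [Finset.range_eq_Ico]
      exact (Finset.sum_Ico_consecutive (m := 0) (n := n) (k := 2 * n) (fun i => Y i ω) (by omega) (by omega)).symm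
    rw [hsplit, hg_def]
    by_cases hc : S₁ ω ≤ ψ
    · simp only [hc, if_true]
      rw [hS₁ ω, hS₂def]
      show (T₁ ω + T₂ ω) / (2 * (n:ℝ)) = (T₁ ω / n + T₂ ω / n) / 2
      rw [← add_div, div_div, mul_comm]
    · simp only [hc, if_false]
  -- move to the product measure
  set μ : Measure ℝ := gaussianReal θ vn with hμ_def
  have hpair : Measure.map (fun ω => (S₁ ω, S₂ ω)) P = μ.prod μ := by
    rw [show μ.prod μ = (Measure.map S₁ P).prod (Measure.map S₂ P) by rw [hmapS₁, hmapS₂]]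
    exact (indepFun_iff_map_prod_eq_prod_map_map hS₁m.aemeasurable hS₂m.aemeasurable).mp hindepS
  have hstep : ∫ ω, θhat ω ∂P = ∫ p, g p ∂(μ.prod μ) := by
    rw [hθhat_eq, ← hpair, integral_map (hS₁m.prodMk hS₂m).aemeasurable
      hg_meas.aestronglyMeasurable]
  rw [hstep]
  -- integrability
  have hint_id : Integrable (fun x : ℝ => x) μ := by
    rw [hμ_def, integrable_gaussianReal_iff hvn]
    exact (int_pdf_mul hvn).congr (Filter.Eventually.of_forall fun x => mul_comm _ _)
  have hint_abs : Integrable (fun x : ℝ => |x|) μ := by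
    simpa using hint_id.norm
  have hb1 : Integrable (fun p : ℝ × ℝ => |p.1|) (μ.prod μ) := by
    rw [integrable_prod_iff (f := fun p : ℝ × ℝ => |p.1|) measurable_fst.norm.aestronglyMeasurable]
    constructor
    · exact Filter.Eventually.of_forall fun x => by simpa using integrable_const |x|
    · apply hint_abs.norm.congr
      filter_upwards with x
      simp [integral_const]
  have hb2 : Integrable (fun p : ℝ × ℝ => |p.2|) (μ.prod μ) := by
    rw [integrable_prod_iff (f := fun p : ℝ × ℝ => |p.2|) measurable_snd.norm.aestronglyMeasurable]
    constructor
    · exact Filter.Eventually.of_forall fun x => hint_abs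
    · apply (integrable_const (∫ y, ‖|y|‖ ∂μ)).congr
      filter_upwards with x
      rfl
  have hg_int : Integrable g (μ.prod μ) := by
    apply (hb1.add hb2).mono' hg_meas.aestronglyMeasurable
    filter_upwards with p
    rw [hg_def, Real.norm_eq_abs]
    simp only [Pi.add_apply]
    by_cases hc : p.1 ≤ ψ
    · simp only [hc, if_true]
      rw [abs_div]
      have h1 := abs_add_le p.1 p.2
      have h2 : |(2:ℝ)| = 2 := by norm_num
      have h3 := abs_nonneg p.1
      have h4 := abs_nonneg p.2
      rw [h2]
      linarith
    · simp only [hc, if_false]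
      have h4 := abs_nonneg p.2
      linarith
  rw [integral_prod _ hg_int]
  have hmean : ∫ y, y ∂μ = θ := by
    rw [hμ_def]
    rw [show (fun y : ℝ => y) = fun y : ℝ => id y from rfl, integral_gaussianReal hvn]
    simpa using int_pdf_mean (m := θ) hvn
  have hinner : ∀ x : ℝ, ∫ y, g (x, y) ∂μ = if x ≤ ψ then (x + θ) / 2 else x := by
    intro x
    by_cases hx : x ≤ ψ
    · simp only [hg_def, hx, if_true]
      rw [integral_div, integral_add (integrable_const x) hint_id, integral_const, probReal_univ,
        hmean]
      simp
    · simp only [hg_def, hx, if_false]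
      rw [integral_const, probReal_univ]
      simp
  simp_rw [hinner]
  have hsplit2 : (fun x : ℝ => if x ≤ ψ then (x + θ) / 2 else x)
      = fun x => x + (Set.Iic ψ).indicator (fun t => (θ - t) / 2) x := by
    funext x
    by_cases hx : x ≤ ψ
    · simp only [hx, if_true, Set.indicator_apply, Set.mem_Iic]
      ring
    · simp [Set.indicator_apply, Set.mem_Iic, hx]
  rw [hsplit2]
  have hind_int : Integrable ((Set.Iic ψ).indicator fun t => (θ - t) / 2) μ :=
    (((integrable_const θ).sub hint_id).div_const 2).indicator measurableSet_Iic
  rw [integral_add hint_id hind_int, integral_indicator measurableSet_Iic, hmean, hμ_def,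
    setIntegral_gaussianReal hvn _ measurableSet_Iic]
  simp_rw [← mul_div_assoc]
  rw [integral_div, int_Iic_pdf hvn]
  -- final numerical identity
  congr 1
  simp only [gaussianPDFReal, stdNormalPDF, hvn_coe]
  have hexp : -(Real.sqrt n / σ * (ψ - θ)) ^ 2 / 2 = -(ψ - θ) ^ 2 / (2 * (σ ^ 2 / n)) := by
    rw [mul_pow, div_pow, Real.sq_sqrt hnpos.le]
    field_simp
  rw [hexp]
  have hs1 : Real.sqrt (2 * π * (σ ^ 2 / n)) = Real.sqrt (2 * π) * (σ / Real.sqrt n) := by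
    rw [Real.sqrt_mul (by positivity) (σ ^ 2 / n), Real.sqrt_div (sq_nonneg σ),
      Real.sqrt_sq hσ.le]
  rw [hs1]
  have hsn : Real.sqrt n ≠ 0 := by positivity
  have hs2 : Real.sqrt (2 * π) ≠ 0 := by positivity
  field_simp
  have hnn : Real.sqrt n * Real.sqrt n = (n:ℝ) := Real.mul_self_sqrt hnpos.le
  linear_combination hnn
end

section
/- Let Θ have the density f(θ) = Φ(ε(a + bθ − ȳ)/ω)·φ((θ − m)/s) / (s·Φ(ε(a + bm − ȳ)/√(ω² + s²b²))) with s > 0, ω > 0, ε ∈ {+1,−1}. Then the moment generating function of Θ is M(t) = exp(t²s²/2 + m t) · Φ(ε(a + b(m + t s²) − ȳ)/√(ω² + s²b²)) / Φ(ε(a + bm − ȳ)/√(ω² + s²b²)). -/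
open MeasureTheory ProbabilityTheory Real

open Set Filter


lemma pdf_nonneg (z : ℝ) : 0 ≤ stdNormalPDF z := by
  unfold stdNormalPDF; positivity

lemma pdf_pos (z : ℝ) : 0 < stdNormalPDF z := by
  unfold stdNormalPDF
  have : (0:ℝ) < Real.sqrt (2 * Real.pi) := Real.sqrt_pos.2 (by positivity)
  positivity

lemma pdf_continuous : Continuous stdNormalPDF := by
  unfold stdNormalPDF; fun_prop

lemma pdf_integrable : Integrable stdNormalPDF := by
  have h := (integrable_exp_neg_mul_sq (by norm_num : (0:ℝ) < 1/2)).const_mul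
      (Real.sqrt (2 * Real.pi))⁻¹
  refine h.congr (Eventually.of_forall fun x => ?_)
  unfold stdNormalPDF; ring_nf

lemma pdf_integral_one : ∫ z, stdNormalPDF z = 1 := by
  unfold stdNormalPDF
  rw [integral_const_mul]
  have : ∀ x : ℝ, Real.exp (-x ^ 2 / 2) = Real.exp (-(1/2) * x ^ 2) := by
    intro x; ring_nf
  simp_rw [this, integral_gaussian]
  have : π / (1/2 : ℝ) = 2 * π := by ring
  rw [this, inv_mul_cancel₀ (by positivity)]

lemma cdf_pos (z : ℝ) : 0 < stdNormalCDF z := by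
  unfold stdNormalCDF
  rw [setIntegral_pos_iff_support_of_nonneg_ae
    (Eventually.of_forall fun x => pdf_nonneg x) pdf_integrable.integrableOn]
  have : Function.support stdNormalPDF = Set.univ := by
    ext x; simp [Function.mem_support, (pdf_pos x).ne']
  rw [this, Set.univ_inter]
  simp [Real.volume_Iic]

lemma cdf_le_one (z : ℝ) : stdNormalCDF z ≤ 1 := by
  unfold stdNormalCDF
  rw [← pdf_integral_one]
  exact setIntegral_le_integral pdf_integrable (Eventually.of_forall fun x => pdf_nonneg x)

lemma cdf_mono : Monotone stdNormalCDF := by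
  intro x y hxy
  unfold stdNormalCDF
  exact setIntegral_mono_set pdf_integrable.integrableOn
    (Eventually.of_forall fun x => pdf_nonneg x)
    (HasSubset.Subset.eventuallyLE (Set.Iic_subset_Iic.2 hxy))

lemma cdf_measurable : Measurable stdNormalCDF := cdf_mono.measurable

lemma cdf_integral_affine (c d z : ℝ) (hc : 0 < c) :
    ∫ u in Set.Iic z, c⁻¹ * stdNormalPDF ((u + d)/c) = stdNormalCDF ((z + d)/c) := by
  have key : ∀ u : ℝ, (Set.Iic z).indicator (fun u => c⁻¹ * stdNormalPDF ((u + d)/c)) u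
      = c⁻¹ * ((Set.Iic ((z+d)/c)).indicator stdNormalPDF) ((u + d)/c) := by
    intro u
    by_cases h : u ≤ z
    · rw [Set.indicator_of_mem (by exact h), Set.indicator_of_mem]
      exact (div_le_div_iff_of_pos_right hc).2 (by linarith)
    · rw [Set.indicator_of_notMem (by exact h), Set.indicator_of_notMem, mul_zero]
      intro hmem
      exact h (by
        have := (div_le_div_iff_of_pos_right hc).1 hmem
        linarith)
  rw [← integral_indicator measurableSet_Iic]
  simp_rw [key]
  rw [integral_add_right_eq_self (fun v => c⁻¹ * ((Set.Iic ((z+d)/c)).indicator stdNormalPDF) (v/c)) d]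
  rw [integral_const_mul, Measure.integral_comp_div
    ((Set.Iic ((z+d)/c)).indicator stdNormalPDF) c]
  rw [integral_indicator measurableSet_Iic]
  rw [abs_of_pos hc, smul_eq_mul, ← mul_assoc, inv_mul_cancel₀ hc.ne', one_mul]
  rfl

lemma conv_lemma (s β y μ : ℝ) (hs : 0 < s) :
    ∫ θ : ℝ, stdNormalPDF (y + β * θ) * (stdNormalPDF ((θ - μ)/s) * s⁻¹)
      = (Real.sqrt (1 + β^2*s^2))⁻¹
          * stdNormalPDF ((y + β*μ) / Real.sqrt (1 + β^2*s^2)) := by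
  have hC : (0:ℝ) < 1 + β^2*s^2 := by positivity
  set C : ℝ := 1 + β^2*s^2 with hCdef
  have hc : (0:ℝ) < Real.sqrt C := Real.sqrt_pos.2 hC
  have hc2 : Real.sqrt C ^ 2 = C := Real.sq_sqrt hC.le
  have h2π : (0:ℝ) < Real.sqrt (2*π) := Real.sqrt_pos.2 (by positivity)
  set θstar : ℝ := (μ - β*y*s^2)/C with hθstar
  have key : ∀ θ : ℝ, stdNormalPDF (y + β * θ) * (stdNormalPDF ((θ - μ)/s) * s⁻¹)
      = ((Real.sqrt C)⁻¹ * stdNormalPDF ((y + β*μ) / Real.sqrt C))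
        * ((Real.sqrt (2*π))⁻¹ * (Real.sqrt C / s)
            * Real.exp (-(C/(2*s^2)) * (θ - θstar)^2)) := by
    intro θ
    have e : Real.exp (-(y + β*θ)^2/2) * Real.exp (-((θ - μ)/s)^2/2)
        = Real.exp (-((y + β*μ)/Real.sqrt C)^2/2)
          * Real.exp (-(C/(2*s^2)) * (θ - θstar)^2) := by
      rw [← Real.exp_add, ← Real.exp_add]
      congr 1
      have h1 : ((y + β*μ)/Real.sqrt C)^2 = (y + β*μ)^2/C := by rw [div_pow, hc2]
      rw [h1, hθstar, hCdef]
      field_simp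
      ring
    unfold stdNormalPDF
    calc (Real.sqrt (2*π))⁻¹ * Real.exp (-(y + β*θ)^2/2)
          * ((Real.sqrt (2*π))⁻¹ * Real.exp (-((θ - μ)/s)^2/2) * s⁻¹)
        = (Real.sqrt (2*π))⁻¹ * (Real.sqrt (2*π))⁻¹ * s⁻¹
            * (Real.exp (-(y + β*θ)^2/2) * Real.exp (-((θ - μ)/s)^2/2)) := by ring
      _ = (Real.sqrt (2*π))⁻¹ * (Real.sqrt (2*π))⁻¹ * s⁻¹
            * (Real.exp (-((y + β*μ)/Real.sqrt C)^2/2)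
                * Real.exp (-(C/(2*s^2)) * (θ - θstar)^2)) := by rw [e]
      _ = _ := by field_simp
  simp_rw [key]
  rw [integral_const_mul]
  have hshift : ∫ θ : ℝ, (Real.sqrt (2*π))⁻¹ * (Real.sqrt C / s)
      * Real.exp (-(C/(2*s^2)) * (θ - θstar)^2) = 1 := by
    rw [integral_const_mul]
    have : ∀ θ : ℝ, Real.exp (-(C/(2*s^2)) * (θ - θstar)^2)
        = (fun v => Real.exp (-(C/(2*s^2)) * v^2)) (θ + -θstar) := by
      intro θ; simp [sub_eq_add_neg]
    simp_rw [this]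
    rw [integral_add_right_eq_self (fun v => Real.exp (-(C/(2*s^2)) * v^2)) (-θstar)]
    rw [integral_gaussian]
    have hπ : π / (C/(2*s^2)) = (2*π) * s^2 / C := by field_simp
    rw [hπ, Real.sqrt_div (by positivity) C, Real.sqrt_mul (by positivity) (s^2),
      Real.sqrt_sq hs.le]
    field_simp
  rw [hshift, mul_one]
lemma cdf_nonneg' (z : ℝ) : 0 ≤ stdNormalCDF z := (cdf_pos z).le

lemma cdf_shift (x : ℝ) : stdNormalCDF x = ∫ u in Set.Iic 0, stdNormalPDF (u + x) := by
  have h := cdf_integral_affine 1 x 0 one_pos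
  simp only [inv_one, one_mul, div_one, zero_add] at h
  exact h.symm

lemma pdf_affine_integrable (c d : ℝ) (hc : 0 < c) :
    Integrable (fun θ : ℝ => stdNormalPDF ((θ - d)/c)) := by
  have hpt : ∀ x : ℝ, stdNormalPDF (x/c)
      = (Real.sqrt (2*Real.pi))⁻¹ * Real.exp (-(1/(2*c^2)) * x^2) := by
    intro x
    unfold stdNormalPDF
    congr 1
    rw [div_pow]
    field_simp
  have h1 : Integrable (fun v : ℝ => stdNormalPDF (v/c)) := by
    simp_rw [hpt]
    exact (integrable_exp_neg_mul_sq (by positivity)).const_mul _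
  exact h1.comp_sub_right d

lemma key_lemma (s α β μ : ℝ) (hs : 0 < s) :
    ∫ θ : ℝ, stdNormalCDF (α + β * θ) * (stdNormalPDF ((θ - μ)/s) * s⁻¹)
      = stdNormalCDF ((α + β*μ) / Real.sqrt (1 + β^2*s^2)) := by
  set ρ : ℝ → ℝ := fun θ => stdNormalPDF ((θ - μ)/s) * s⁻¹ with hρ
  have hρ_nonneg : ∀ θ, 0 ≤ ρ θ := fun θ => mul_nonneg (pdf_nonneg _) (by positivity)
  have hρ_int : Integrable ρ := (pdf_affine_integrable s μ hs).mul_const _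
  have hρ_meas : AEStronglyMeasurable ρ volume := by
    rw [hρ]
    exact ((pdf_continuous.comp (by fun_prop)).mul continuous_const).aestronglyMeasurable
  have step1 : ∀ θ : ℝ, stdNormalCDF (α + β * θ) * ρ θ
      = ∫ u in Set.Iic 0, stdNormalPDF (u + (α + β * θ)) * ρ θ := by
    intro θ
    rw [cdf_shift (α + β * θ), ← integral_mul_const]
  change ∫ θ : ℝ, stdNormalCDF (α + β * θ) * ρ θ = _
  simp_rw [step1]
  have hF_nonneg : ∀ θ u : ℝ, 0 ≤ stdNormalPDF (u + (α + β * θ)) * ρ θ :=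
    fun θ u => mul_nonneg (pdf_nonneg _) (hρ_nonneg θ)
  have hnorm : ∀ θ : ℝ, (∫ u in Set.Iic 0, ‖stdNormalPDF (u + (α + β * θ)) * ρ θ‖)
      = stdNormalCDF (α + β * θ) * ρ θ := by
    intro θ
    rw [step1 θ]
    refine integral_congr_ae (Eventually.of_forall fun u => ?_)
    show ‖stdNormalPDF (u + (α + β * θ)) * ρ θ‖ = _
    rw [Real.norm_eq_abs, abs_of_nonneg (hF_nonneg θ u)]
  have hF_cont : Continuous (fun p : ℝ × ℝ => stdNormalPDF (p.2 + (α + β * p.1)) * ρ p.1) := by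
    have h1 : Continuous fun p : ℝ × ℝ => p.2 + (α + β * p.1) := by fun_prop
    have h2 : Continuous fun p : ℝ × ℝ => (p.1 - μ)/s := by fun_prop
    rw [hρ]
    exact (pdf_continuous.comp h1).mul ((pdf_continuous.comp h2).mul continuous_const)
  have hF_int : Integrable (fun p : ℝ × ℝ => stdNormalPDF (p.2 + (α + β * p.1)) * ρ p.1)
      ((volume : Measure ℝ).prod ((volume : Measure ℝ).restrict (Set.Iic 0))) := by
    rw [integrable_prod_iff hF_cont.aestronglyMeasurable]
    constructor
    · refine Eventually.of_forall fun θ => ?_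
      show Integrable (fun u : ℝ => stdNormalPDF (u + (α + β * θ)) * ρ θ)
        ((volume : Measure ℝ).restrict (Set.Iic 0))
      exact (pdf_integrable.comp_add_right (α + β * θ)).integrableOn.mul_const _
    · show Integrable
          (fun θ : ℝ => ∫ u in Set.Iic 0, ‖stdNormalPDF (u + (α + β * θ)) * ρ θ‖) volume
      have heq : (fun θ => ∫ u in Set.Iic 0, ‖stdNormalPDF (u + (α + β * θ)) * ρ θ‖)
          = fun θ => stdNormalCDF (α + β * θ) * ρ θ := funext hnorm
      rw [heq]
      refine Integrable.mono' hρ_int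
        (((cdf_measurable.comp (by fun_prop)).aestronglyMeasurable).mul hρ_meas)
        (Eventually.of_forall fun θ => ?_)
      rw [Real.norm_eq_abs, abs_of_nonneg (mul_nonneg (cdf_nonneg' _) (hρ_nonneg θ))]
      calc stdNormalCDF (α + β * θ) * ρ θ ≤ 1 * ρ θ :=
            mul_le_mul_of_nonneg_right (cdf_le_one _) (hρ_nonneg θ)
        _ = ρ θ := one_mul _
  rw [integral_integral_swap
    (f := fun θ u => stdNormalPDF (u + (α + β * θ)) * ρ θ) hF_int]
  have hinner : ∀ u : ℝ, (∫ θ, stdNormalPDF (u + (α + β * θ)) * ρ θ)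
      = (Real.sqrt (1 + β^2*s^2))⁻¹
          * stdNormalPDF ((u + (α + β*μ)) / Real.sqrt (1 + β^2*s^2)) := by
    intro u
    have h := conv_lemma s β (u + α) μ hs
    have harg : ∀ θ : ℝ, stdNormalPDF (u + (α + β * θ)) * ρ θ
        = stdNormalPDF ((u + α) + β * θ) * (stdNormalPDF ((θ - μ)/s) * s⁻¹) := by
      intro θ
      rw [hρ]
      have : u + (α + β * θ) = (u + α) + β * θ := by ring
      rw [this]
    simp_rw [harg]
    rw [h]
    congr 2
    ring
  simp_rw [hinner]
  have := cdf_integral_affine (Real.sqrt (1 + β^2*s^2)) (α + β*μ) 0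
    (Real.sqrt_pos.2 (by positivity))
  rw [this, zero_add]
lemma exp_tilt (s m t θ : ℝ) (hs : 0 < s) :
    Real.exp (t * θ) * stdNormalPDF ((θ - m)/s)
      = Real.exp (t^2*s^2/2 + m*t) * stdNormalPDF ((θ - (m + t*s^2))/s) := by
  unfold stdNormalPDF
  rw [mul_comm (Real.exp (t * θ)), mul_assoc, ← Real.exp_add,
    mul_comm (Real.exp (t^2*s^2/2 + m*t)), mul_assoc, ← Real.exp_add]
  congr 1
  rw [div_pow, div_pow]
  field_simp
  ring

theorem stmt_14 (m s a b ω ybar : ℝ) (hs : 0 < s) (hω : 0 < ω)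
    (ε : ℝ) (hε : ε = 1 ∨ ε = -1)
    (f : ℝ → ℝ)
    (hf : ∀ θ, f θ = stdNormalCDF (ε * (a + b * θ - ybar) / ω) * stdNormalPDF ((θ - m) / s)
        / (s * stdNormalCDF (ε * (a + b * m - ybar) / Real.sqrt (ω ^ 2 + s ^ 2 * b ^ 2)))) :
    ∀ t : ℝ, ∫ θ : ℝ, Real.exp (t * θ) * f θ
      = Real.exp (t ^ 2 * s ^ 2 / 2 + m * t)
          * stdNormalCDF (ε * (a + b * (m + t * s ^ 2) - ybar)
              / Real.sqrt (ω ^ 2 + s ^ 2 * b ^ 2))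
          / stdNormalCDF (ε * (a + b * m - ybar) / Real.sqrt (ω ^ 2 + s ^ 2 * b ^ 2)) := by
  intro t
  have hε2 : ε^2 = 1 := by rcases hε with h | h <;> rw [h] <;> norm_num
  have hW : (0:ℝ) < ω^2 + s^2*b^2 := by positivity
  have hsW : (0:ℝ) < Real.sqrt (ω^2 + s^2*b^2) := Real.sqrt_pos.2 hW
  set α : ℝ := ε*(a - ybar)/ω with hα
  set β : ℝ := ε*b/ω with hβ
  set m' : ℝ := m + t*s^2 with hm'
  set D : ℝ := stdNormalCDF (ε * (a + b * m - ybar) / Real.sqrt (ω ^ 2 + s ^ 2 * b ^ 2))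
    with hD
  have hDpos : 0 < D := cdf_pos _
  set E : ℝ := Real.exp (t^2*s^2/2 + m*t) with hE
  have hsq : 1 + β^2*s^2 = (ω^2 + s^2*b^2)/ω^2 := by
    have hb2 : β^2 = b^2/ω^2 := by rw [hβ, div_pow, mul_pow, hε2, one_mul]
    rw [hb2]
    field_simp
  have hsqrt : Real.sqrt (1 + β^2*s^2) = Real.sqrt (ω^2 + s^2*b^2) / ω := by
    rw [hsq, Real.sqrt_div hW.le, Real.sqrt_sq hω.le]
  have harg : ∀ θ : ℝ, ε * (a + b * θ - ybar) / ω = α + β * θ := by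
    intro θ
    rw [hα, hβ]
    field_simp
    ring
  have hpt : ∀ θ : ℝ, Real.exp (t * θ) * f θ
      = (E / D) * (stdNormalCDF (α + β*θ) * (stdNormalPDF ((θ - m')/s) * s⁻¹)) := by
    intro θ
    have h := exp_tilt s m t θ hs
    rw [hf θ, harg θ, hE, hm']
    linear_combination (stdNormalCDF (α + β*θ) / (s*D)) * h
  simp_rw [hpt]
  rw [integral_const_mul, key_lemma s α β m' hs]
  have hfinal : (α + β*m') / Real.sqrt (1 + β^2*s^2)
      = ε * (a + b * m' - ybar) / Real.sqrt (ω^2 + s^2*b^2) := by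
    rw [hsqrt, hα, hβ]
    field_simp
    ring
  rw [hfinal]
  rw [hm']
  ring
end
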